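/- Formal power series identity (core of the Debbah–Ryan proof): let λ ∈ ℝ, T(z) = (λz+1)(z+1), and let m ∈ ℝ[[z]] with m(0)=0 and m'(0) ≠ 0, with compositional inverse m^{⟨−1⟩}. Define H(z) = z·T(m(z)), g(z) = H(z)/T(H(z)+m(z)) (a power series with g(0)=0 and g'(0)=1), and M(z) = the power series whose compositional inverse is (1/(1+λz))·(z/(1+z))∘[(z+1)·((1+λz)m^{⟨−1⟩}(z))^{⟨−1⟩}+z]^{⟨−1⟩}. Then M ∘ g = H + m. -/

import Mathlib

open PowerSeries

/-- Composition `f ∘ g` of formal power series (valid when `g` has zero constant term). -/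
noncomputable def psComp (f g : PowerSeries ℝ) : PowerSeries ℝ :=
  PowerSeries.mk fun n => PowerSeries.coeff n (Polynomial.aeval g (PowerSeries.trunc (n+1) f))

/-- `T(s) = (λ s + 1)(s + 1)` applied to a power series `s`. -/
noncomputable def Tser (lam : ℝ) (s : PowerSeries ℝ) : PowerSeries ℝ :=
  (PowerSeries.C lam * s + 1) * (s + 1)


lemma coeff_pow_eq_zero {g : PowerSeries ℝ} (hg : constantCoeff g = 0)
    {n k : ℕ} (h : n < k) : coeff n (g ^ k) = 0 := by
  have hx : (X : PowerSeries ℝ) ^ k ∣ g ^ k :=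
    pow_dvd_pow_of_dvd (PowerSeries.X_dvd_iff.mpr hg) k
  exact PowerSeries.X_pow_dvd_iff.mp hx n h

lemma coeff_aeval {g : PowerSeries ℝ} (hg : constantCoeff g = 0)
    (P : Polynomial ℝ) (n : ℕ) :
    coeff n (Polynomial.aeval g P) =
      ∑ k ∈ Finset.range (n+1), P.coeff k * coeff n (g ^ k) := by
  set N := max (n+1) (P.natDegree + 1) with hN
  have hdeg : P.natDegree < N := lt_of_lt_of_le (Nat.lt_succ_self _) (le_max_right _ _)
  rw [Polynomial.aeval_eq_sum_range' hdeg, map_sum]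
  have : ∀ k ∈ Finset.range N, coeff n (P.coeff k • g ^ k) = P.coeff k * coeff n (g ^ k) := by
    intro k _; rw [map_smul, smul_eq_mul]
  rw [Finset.sum_congr rfl this]
  refine (Finset.sum_subset (Finset.range_subset_range.mpr (le_max_left _ _)) ?_).symm
  intro k _ hk
  rw [Finset.mem_range, not_lt] at hk
  rw [coeff_pow_eq_zero hg (lt_of_lt_of_le (Nat.lt_succ_self n) hk), mul_zero]

lemma coeff_psComp {g : PowerSeries ℝ} (hg : constantCoeff g = 0)
    (f : PowerSeries ℝ) (n : ℕ) :
    coeff n (psComp f g) = ∑ k ∈ Finset.range (n+1), coeff k f * coeff n (g ^ k) := by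
  rw [psComp, coeff_mk, coeff_aeval hg]
  refine Finset.sum_congr rfl fun k hk => ?_
  rw [coeff_trunc]
  rw [Finset.mem_range] at hk
  rw [if_pos hk]

lemma constantCoeff_psComp {g : PowerSeries ℝ} (hg : constantCoeff g = 0)
    (f : PowerSeries ℝ) : constantCoeff (psComp f g) = constantCoeff f := by
  rw [← coeff_zero_eq_constantCoeff_apply, coeff_psComp hg, ← coeff_zero_eq_constantCoeff_apply]
  simp

lemma psComp_add (f f' g : PowerSeries ℝ) :
    psComp (f + f') g = psComp f g + psComp f' g := by
  ext n
  simp [psComp, map_add]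

lemma psComp_C (a : ℝ) (g : PowerSeries ℝ) : psComp (C a) g = C a := by
  ext n
  simp [psComp, trunc_C, Polynomial.aeval_C]

lemma psComp_one (g : PowerSeries ℝ) : psComp 1 g = 1 := by
  have := psComp_C 1 g
  simpa using this

lemma psComp_X {g : PowerSeries ℝ} (hg : constantCoeff g = 0) :
    psComp X g = g := by
  ext n
  rw [coeff_psComp hg]
  rcases Nat.eq_zero_or_pos n with hn | hn
  · subst hn
    rw [Finset.sum_range_one]
    simp only [coeff_X, if_neg (by norm_num : (0:ℕ) ≠ 1), zero_mul]
    rw [coeff_zero_eq_constantCoeff_apply, hg]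
  · rw [Finset.sum_eq_single 1]
    · simp
    · intro k hk hk1
      rw [coeff_X, if_neg hk1, zero_mul]
    · intro h
      exact absurd (Finset.mem_range.mpr (by omega)) h

lemma psComp_mul {g : PowerSeries ℝ} (hg : constantCoeff g = 0) (f f' : PowerSeries ℝ) :
    psComp (f * f') g = psComp f g * psComp f' g := by
  ext n
  rw [coeff_psComp hg, PowerSeries.coeff_mul]
  have key : ∀ a : ℕ, a ≤ n → coeff a (psComp f g) =
      coeff a (Polynomial.aeval g (trunc (n+1) f)) := by
    intro a ha
    rw [coeff_psComp hg, coeff_aeval hg]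
    refine Finset.sum_congr rfl fun k hk => ?_
    rw [Finset.mem_range] at hk
    rw [coeff_trunc, if_pos (by omega)]
  have key' : ∀ a : ℕ, a ≤ n → coeff a (psComp f' g) =
      coeff a (Polynomial.aeval g (trunc (n+1) f')) := by
    intro a ha
    rw [coeff_psComp hg, coeff_aeval hg]
    refine Finset.sum_congr rfl fun k hk => ?_
    rw [Finset.mem_range] at hk
    rw [coeff_trunc, if_pos (by omega)]
  have : ∑ p ∈ Finset.HasAntidiagonal.antidiagonal n, coeff p.1 (psComp f g) * coeff p.2 (psComp f' g)
      = coeff n (Polynomial.aeval g (trunc (n+1) f) * Polynomial.aeval g (trunc (n+1) f')) := by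
    rw [PowerSeries.coeff_mul]
    refine Finset.sum_congr rfl fun p hp => ?_
    rw [Finset.HasAntidiagonal.mem_antidiagonal] at hp
    rw [key p.1 (by omega), key' p.2 (by omega)]
  rw [this, ← map_mul, coeff_aeval hg]
  refine Finset.sum_congr rfl fun k hk => ?_
  rw [Finset.mem_range] at hk
  congr 1
  rw [Polynomial.coeff_mul, PowerSeries.coeff_mul]
  refine Finset.sum_congr rfl fun p hp => ?_
  rw [Finset.HasAntidiagonal.mem_antidiagonal] at hp
  rw [coeff_trunc, coeff_trunc, if_pos (by omega), if_pos (by omega)]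

lemma psComp_pow {g : PowerSeries ℝ} (hg : constantCoeff g = 0) (f : PowerSeries ℝ) (j : ℕ) :
    psComp (f ^ j) g = (psComp f g) ^ j := by
  induction j with
  | zero => simpa using psComp_one g
  | succ j ih => rw [pow_succ, pow_succ, psComp_mul hg, ih]

lemma psComp_assoc {g h : PowerSeries ℝ} (hg : constantCoeff g = 0)
    (hh : constantCoeff h = 0) (f : PowerSeries ℝ) :
    psComp (psComp f g) h = psComp f (psComp g h) := by
  have hgh : constantCoeff (psComp g h) = 0 := by rw [constantCoeff_psComp hh, hg]
  ext n
  rw [coeff_psComp hh, coeff_psComp hgh]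
  have rhs : ∀ j ∈ Finset.range (n+1),
      coeff j f * coeff n ((psComp g h) ^ j)
      = ∑ k ∈ Finset.range (n+1), coeff j f * (coeff k (g ^ j) * coeff n (h ^ k)) := by
    intro j _
    rw [← psComp_pow hh, coeff_psComp hh, Finset.mul_sum]
  have lhs : ∀ k ∈ Finset.range (n+1),
      coeff k (psComp f g) * coeff n (h ^ k)
      = ∑ j ∈ Finset.range (n+1), coeff j f * coeff k (g ^ j) * coeff n (h ^ k) := by
    intro k hk
    rw [Finset.mem_range] at hk
    rw [coeff_psComp hg, Finset.sum_mul]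
    refine Finset.sum_subset (Finset.range_subset_range.mpr (by omega)) ?_
    intro j _ hj
    rw [Finset.mem_range, not_lt] at hj
    rw [coeff_pow_eq_zero hg (by omega), mul_zero, zero_mul]
  rw [Finset.sum_congr rfl lhs, Finset.sum_congr rfl rhs, Finset.sum_comm]
  exact Finset.sum_congr rfl fun j _ => Finset.sum_congr rfl fun k _ => by ring

/-- Core formal power series identity of the Debbah–Ryan proof:
with `H = z T(m)`, `g = H / T(H+m)`, and `M` the series whose compositional inverse is
`(1/(1+λz)) ⬝ (z/(1+z)) ∘ [(z+1)((1+λz) m⁻¹)⁻¹ + z]⁻¹`, one has `M ∘ g = H + m`. -/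
theorem stmt_14 (lam : ℝ) (m minv H g p q r rinv u Minv M : PowerSeries ℝ)
    -- m and its compositional inverse
    (hm0 : PowerSeries.constantCoeff m = 0) (hm1 : PowerSeries.coeff 1 m ≠ 0)
    (hminv0 : PowerSeries.constantCoeff minv = 0)
    (hinv1 : psComp m minv = PowerSeries.X) (hinv2 : psComp minv m = PowerSeries.X)
    -- H = z T(m)
    (hH : H = PowerSeries.X * Tser lam m)
    -- g = H / T(H + m), with g(0) = 0 and g'(0) = 1
    (hg : g * Tser lam (H + m) = H)
    (hg0 : PowerSeries.constantCoeff g = 0) (hg1 : PowerSeries.coeff 1 g = 1)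
    -- p = (1 + λ z) m⁻¹ and q its compositional inverse
    (hp : p = (1 + PowerSeries.C lam * PowerSeries.X) * minv)
    (hq0 : PowerSeries.constantCoeff q = 0)
    (hq1 : psComp p q = PowerSeries.X) (hq2 : psComp q p = PowerSeries.X)
    -- r = (z+1) q + z and rinv its compositional inverse
    (hr : r = (PowerSeries.X + 1) * q + PowerSeries.X)
    (hrinv0 : PowerSeries.constantCoeff rinv = 0)
    (hr1 : psComp r rinv = PowerSeries.X) (hr2 : psComp rinv r = PowerSeries.X)
    -- u = z/(1+z)
    (hu0 : PowerSeries.constantCoeff u = 0) (hu : u * (1 + PowerSeries.X) = PowerSeries.X)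
    -- Minv = (1/(1+λz)) ⬝ (z/(1+z)) ∘ rinv
    (hMinv : (1 + PowerSeries.C lam * PowerSeries.X) * Minv = psComp u rinv)
    -- M is the series with compositional inverse Minv
    (hM0 : PowerSeries.constantCoeff M = 0)
    (hM1 : psComp M Minv = PowerSeries.X) (hM2 : psComp Minv M = PowerSeries.X) :
    psComp M g = H + m := by
  have hp0 : constantCoeff p = 0 := by
    simp [hp, map_mul, hminv0]
  have hr0 : constantCoeff r = 0 := by
    simp [hr, map_add, map_mul, hq0]
  have hH0 : constantCoeff H = 0 := by
    simp [hH, map_mul]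
  have hw0 : constantCoeff (H + m) = 0 := by
    simp [map_add, hH0, hm0]
  set s : PowerSeries ℝ := X * (1 + C lam * m) with hs
  have hs0 : constantCoeff s = 0 := by
    simp [hs, map_mul]
  -- Step 1 : p ∘ m = s
  have step1 : psComp p m = s := by
    rw [hp, psComp_mul hm0, psComp_add, psComp_one, psComp_mul hm0, psComp_C, psComp_X hm0,
      hinv2, hs]
    ring
  -- Step 2 : q ∘ s = m
  have step2 : psComp q s = m := by
    rw [← step1, ← psComp_assoc hp0 hm0, hq2, psComp_X hm0]
  -- Step 3 : r ∘ s = H + m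
  have step3 : psComp r s = H + m := by
    rw [hr, psComp_add, psComp_mul hs0, psComp_add, psComp_X hs0, psComp_one, step2]
    simp only [hH, hs, Tser]
    ring
  -- Step 4 : rinv ∘ (H + m) = s
  have step4 : psComp rinv (H + m) = s := by
    rw [← step3, ← psComp_assoc hr0 hs0, hr2, psComp_X hs0]
  -- Minv has zero constant term
  have hMinv0 : constantCoeff Minv = 0 := by
    have h := congrArg (constantCoeff) hMinv
    rw [constantCoeff_psComp hrinv0, hu0] at h
    simpa [map_mul, map_add] using h
  -- Step 5 : (1 + λ(H+m)) * (Minv ∘ (H+m)) = u ∘ s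
  have step5 : (1 + C lam * (H + m)) * psComp Minv (H + m) = psComp u s := by
    have h := congrArg (fun F => psComp F (H + m)) hMinv
    rw [psComp_mul hw0, psComp_add, psComp_one, psComp_mul hw0, psComp_C, psComp_X hw0,
      psComp_assoc hrinv0 hw0, step4] at h
    exact h
  -- Step 6 : (u ∘ s) * (1 + s) = s
  have step6 : psComp u s * (1 + s) = s := by
    have h := congrArg (fun F => psComp F s) hu
    rw [psComp_mul hs0, psComp_add, psComp_one, psComp_X hs0] at h
    exact h
  -- nonzero units
  have h1m : (1 + m) ≠ 0 := by
    intro h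
    have h' := congrArg (constantCoeff) h
    simp [map_add, hm0] at h'
  have h1s : (1 + s) ≠ 0 := by
    intro h
    have h' := congrArg (constantCoeff) h
    simp [map_add, hs0] at h'
  have h1lw : (1 + C lam * (H + m)) ≠ 0 := by
    intro h
    have h' := congrArg (constantCoeff) h
    simp [map_add, map_mul, hH0, hm0] at h'
  -- Step 7 : Minv ∘ (H+m) = g
  have hA : (1 + C lam * (H + m)) * psComp Minv (H + m) * (1 + s) = s := by
    rw [mul_assoc, mul_comm (psComp Minv (H + m)) (1 + s), ← mul_assoc, mul_assoc,
      mul_comm (1 + s), ← mul_assoc, step5]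
    exact step6
  have hB : (1 + C lam * (H + m)) * g * (1 + s) = s := by
    apply mul_right_cancel₀ h1m
    have e1 : (1 + C lam * (H + m)) * g * (1 + s) * (1 + m) = g * Tser lam (H + m) := by
      simp only [Tser, hH, hs]
      ring
    rw [e1, hg]
    simp only [hH, hs, Tser]
    ring
  have key : psComp Minv (H + m) = g := by
    have h := hA.trans hB.symm
    have h2 := mul_right_cancel₀ h1s h
    exact mul_left_cancel₀ h1lw h2
  -- Step 8 : conclude
  calc psComp M g = psComp M (psComp Minv (H + m)) := by rw [key]
    _ = psComp (psComp M Minv) (H + m) := (psComp_assoc hMinv0 hw0 M).symm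
    _ = psComp X (H + m) := by rw [hM1]
    _ = H + m := psComp_X hw0
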